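/- A generalized bitopological space (X, μ1, μ2) is pairwise T_{3/8} if and only if every countable subset of X is pairwise λ-closed. -/
import Mathlib


open Set

/-- A generalized topology on `X`: contains `∅` and is closed under arbitrary unions. -/
def IsGenTop {X : Type*} (μ : Set (Set X)) : Prop :=
  ∅ ∈ μ ∧ ∀ S ⊆ μ, ⋃₀ S ∈ μ

/-- `A` is μ-closed iff its complement is μ-open. -/
def gClosedSet {X : Type*} (μ : Set (Set X)) (A : Set X) : Prop := Aᶜ ∈ μ

/-- μ-closure: intersection of all μ-closed sets containing `A`. -/
def gCl {X : Type*} (μ : Set (Set X)) (A : Set X) : Set X :=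
  ⋂₀ {F | gClosedSet μ F ∧ A ⊆ F}

/-- `A^∧_μ`: intersection of all μ-open sets containing `A`. -/
def wedgeOp {X : Type*} (μ : Set (Set X)) (A : Set X) : Set X :=
  ⋂₀ {U | U ∈ μ ∧ A ⊆ U}

/-- `A^∨_μ`: union of all μ-closed sets contained in `A`. -/
def veeOp {X : Type*} (μ : Set (Set X)) (A : Set X) : Set X :=
  ⋃₀ {F | gClosedSet μ F ∧ F ⊆ A}

/-- `L` is a `∧_μ`-set. -/
def IsWedgeSet {X : Type*} (μ : Set (Set X)) (L : Set X) : Prop := L = wedgeOp μ L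

/-- `M` is a `∨_μ`-set. -/
def IsVeeSet {X : Type*} (μ : Set (Set X)) (M : Set X) : Prop := M = veeOp μ M

/-- `A` is `g_{μi}`-closed with respect to `μj`. -/
def GClosedWrt {X : Type*} (μi μj : Set (Set X)) (A : Set X) : Prop :=
  ∀ U ∈ μj, A ⊆ U → gCl μi A ⊆ U

/-- `A` is `g_{μi}`-open with respect to `μj`. -/
def GOpenWrt {X : Type*} (μi μj : Set (Set X)) (A : Set X) : Prop :=
  GClosedWrt μi μj Aᶜ

/-- `A` is `λ_{μi}`-closed with respect to `μj`. -/
def LamClosedWrt {X : Type*} (μi μj : Set (Set X)) (A : Set X) : Prop :=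
  ∃ F L : Set X, gClosedSet μi F ∧ IsWedgeSet μj L ∧ A = F ∩ L

/-- `A` is `λ_{μi}`-open with respect to `μj`. -/
def LamOpenWrt {X : Type*} (μi μj : Set (Set X)) (A : Set X) : Prop :=
  LamClosedWrt μi μj Aᶜ

/-- `A` is pairwise `λ`-closed. -/
def PairwiseLamClosed {X : Type*} (μ1 μ2 : Set (Set X)) (A : Set X) : Prop :=
  ∃ F1 F2 L1 L2 : Set X, gClosedSet μ1 F1 ∧ gClosedSet μ2 F2 ∧
    IsWedgeSet μ1 L1 ∧ IsWedgeSet μ2 L2 ∧ A = (F1 ∩ F2) ∩ (L1 ∩ L2)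

def PairwiseT0 {X : Type*} (μ1 μ2 : Set (Set X)) : Prop :=
  ∀ x y : X, x ≠ y →
    (∃ U ∈ μ1, x ∈ U ∧ y ∉ U) ∨ (∃ V ∈ μ2, y ∈ V ∧ x ∉ V)

def PairwiseT1 {X : Type*} (μ1 μ2 : Set (Set X)) : Prop :=
  ∀ x y : X, x ≠ y →
    (∃ U ∈ μ1, x ∈ U ∧ y ∉ U) ∧ (∃ V ∈ μ2, y ∈ V ∧ x ∉ V)

def PairwiseSymmetric {X : Type*} (μ1 μ2 : Set (Set X)) : Prop :=
  ∀ x y : X, (x ∈ gCl μ1 {y} → y ∈ gCl μ2 {x}) ∧ (x ∈ gCl μ2 {y} → y ∈ gCl μ1 {x})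

def PairwiseTHalf {X : Type*} (μ1 μ2 : Set (Set X)) : Prop :=
  (∀ A : Set X, GClosedWrt μ1 μ2 A → gClosedSet μ1 A) ∧
  (∀ A : Set X, GClosedWrt μ2 μ1 A → gClosedSet μ2 A)

def PairwiseR0 {X : Type*} (μ1 μ2 : Set (Set X)) : Prop :=
  (∀ G ∈ μ1, ∀ x ∈ G, gCl μ2 {x} ⊆ G) ∧ (∀ G ∈ μ2, ∀ x ∈ G, gCl μ1 {x} ⊆ G)

def PairwiseLamSymmetric {X : Type*} (μ1 μ2 : Set (Set X)) : Prop :=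
  ∀ A : Set X, PairwiseLamClosed μ1 μ2 A →
    LamClosedWrt μ1 μ2 A ∧ LamClosedWrt μ2 μ1 A

/-- `A` and `B` are μ-weakly separated. -/
def MuWeaklySeparated {X : Type*} (μ : Set (Set X)) (A B : Set X) : Prop :=
  ∃ U ∈ μ, ∃ V ∈ μ, A ⊆ U ∧ B ⊆ V ∧ A ∩ V = ∅ ∧ B ∩ U = ∅

def PairwiseTQuarter {X : Type*} (μ1 μ2 : Set (Set X)) : Prop :=
  ∀ P : Set X, P.Finite → ∀ y ∉ P,
    ∃ A : Set X, P ⊆ A ∧ y ∉ A ∧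
      (A ∈ μ1 ∨ A ∈ μ2 ∨ gClosedSet μ1 A ∨ gClosedSet μ2 A)

def PairwiseTThreeEighths {X : Type*} (μ1 μ2 : Set (Set X)) : Prop :=
  ∀ P : Set X, P.Countable → ∀ y ∉ P,
    ∃ A : Set X, P ⊆ A ∧ y ∉ A ∧
      (A ∈ μ1 ∨ A ∈ μ2 ∨ gClosedSet μ1 A ∨ gClosedSet μ2 A)

def PairwiseTFiveEighths {X : Type*} (μ1 μ2 : Set (Set X)) : Prop :=
  ∀ P : Set X, ∀ y ∉ P,
    ∃ A : Set X, P ⊆ A ∧ y ∉ A ∧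
      (A ∈ μ1 ∨ A ∈ μ2 ∨ gClosedSet μ1 A ∨ gClosedSet μ2 A)
lemma gCl_closed' {X : Type*} {μ : Set (Set X)} (h : IsGenTop μ) (A : Set X) :
    gClosedSet μ (gCl μ A) := by
  have : (gCl μ A)ᶜ = ⋃₀ {U | U ∈ μ ∧ A ⊆ Uᶜ} := by
    ext x
    simp only [gCl, gClosedSet, mem_compl_iff, mem_sInter, mem_sUnion, mem_setOf_eq, not_forall]
    constructor
    · rintro ⟨F, ⟨hF, hAF⟩, hx⟩
      exact ⟨Fᶜ, ⟨hF, by simpa using hAF⟩, hx⟩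
    · rintro ⟨U, ⟨hU, hAU⟩, hx⟩
      exact ⟨Uᶜ, ⟨by simpa using hU, hAU⟩, by simpa using hx⟩
  unfold gClosedSet
  rw [this]
  exact h.2 _ (fun U hU => hU.1)

lemma wedge_isWedge' {X : Type*} (μ : Set (Set X)) (A : Set X) :
    IsWedgeSet μ (wedgeOp μ A) := by
  unfold IsWedgeSet wedgeOp
  apply Subset.antisymm
  · intro x hx U hU
    exact hU.2 (fun F hF => hx F hF)
  · intro x hx U hU
    exact hx U ⟨hU.1, fun z hz => hz U hU⟩

theorem stmt17 {X : Type*} (μ1 μ2 : Set (Set X))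
    (h1 : IsGenTop μ1) (h2 : IsGenTop μ2) :
    PairwiseTThreeEighths μ1 μ2 ↔
      ∀ P : Set X, P.Countable → PairwiseLamClosed μ1 μ2 P := by
  constructor
  · intro h P hP
    refine ⟨gCl μ1 P, gCl μ2 P, wedgeOp μ1 P, wedgeOp μ2 P,
      gCl_closed' h1 P, gCl_closed' h2 P, wedge_isWedge' μ1 P, wedge_isWedge' μ2 P, ?_⟩
    apply Subset.antisymm
    · intro x hx
      exact ⟨⟨fun F hF => hF.2 hx, fun F hF => hF.2 hx⟩,
             fun U hU => hU.2 hx, fun U hU => hU.2 hx⟩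
    · intro x hx
      by_contra hxP
      obtain ⟨A, hPA, hxA, hcase⟩ := h P hP x hxP
      rcases hcase with hA | hA | hA | hA
      · exact hxA (hx.2.1 A ⟨hA, hPA⟩)
      · exact hxA (hx.2.2 A ⟨hA, hPA⟩)
      · exact hxA (hx.1.1 A ⟨hA, hPA⟩)
      · exact hxA (hx.1.2 A ⟨hA, hPA⟩)
  · intro h P hP y hy
    obtain ⟨F1, F2, L1, L2, hF1, hF2, hL1, hL2, hEq⟩ := h P hP
    have hsub1 : P ⊆ F1 := fun x hx => (hEq ▸ hx).1.1
    have hsub2 : P ⊆ F2 := fun x hx => (hEq ▸ hx).1.2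
    have hsub3 : P ⊆ L1 := fun x hx => (hEq ▸ hx).2.1
    have hsub4 : P ⊆ L2 := fun x hx => (hEq ▸ hx).2.2
    by_cases hy1 : y ∈ F1
    · by_cases hy2 : y ∈ F2
      · by_cases hy3 : y ∈ L1
        · by_cases hy4 : y ∈ L2
          · exact absurd (hEq ▸ ⟨⟨hy1, hy2⟩, hy3, hy4⟩ : y ∈ P) hy
          · -- y ∉ L2 = wedgeOp μ2 L2
            rw [hL2] at hy4
            simp only [wedgeOp, mem_sInter, mem_setOf_eq, not_forall] at hy4
            obtain ⟨U, ⟨hU, hLU⟩, hyU⟩ := hy4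
            exact ⟨U, hsub4.trans (hL2 ▸ fun z hz => hz U ⟨hU, hLU⟩), hyU, Or.inr (Or.inl hU)⟩
        · rw [hL1] at hy3
          simp only [wedgeOp, mem_sInter, mem_setOf_eq, not_forall] at hy3
          obtain ⟨U, ⟨hU, hLU⟩, hyU⟩ := hy3
          exact ⟨U, hsub3.trans (hL1 ▸ fun z hz => hz U ⟨hU, hLU⟩), hyU, Or.inl hU⟩
      · exact ⟨F2, hsub2, hy2, Or.inr (Or.inr (Or.inr hF2))⟩
    · exact ⟨F1, hsub1, hy1, Or.inr (Or.inr (Or.inl hF1))⟩
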